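/- Let P be a root pairing over a field k with index set ι, and let i₁, …, i_r ∈ ι be indices whose coroots P.coroot i₁, …, P.coroot i_r are linearly independent in N. Let w = s_{i_r} ∘ ⋯ ∘ s_{i_1} be the composite of the corresponding coreflections acting on N. If v ∈ N satisfies w v = v, then ⟨P.root i_j, v⟩ = 0 for every j = 1, …, r; in particular v is fixed by each individual coreflection s_{i_j}. -/

import Mathlib

private lemma aux_prod_sub_mem {ι k M N : Type*} [Field k] [AddCommGroup M] [Module k M]
    [AddCommGroup N] [Module k N] (P : RootPairing ι k M N) (l : List ι) (v : N) :
    ((l.map fun i => P.coreflection i).prod : N ≃ₗ[k] N) v - v ∈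
      Submodule.span k (P.coroot '' {i | i ∈ l}) := by
  induction l with
  | nil => simp
  | cons i l ih =>
    have h : ((List.map (fun i => P.coreflection i) (i :: l)).prod : N ≃ₗ[k] N) v
        = P.coreflection i (((l.map fun i => P.coreflection i).prod : N ≃ₗ[k] N) v) := by
      rw [List.map_cons, List.prod_cons]
      rfl
    set u := ((l.map fun i => P.coreflection i).prod : N ≃ₗ[k] N) v with hu
    rw [h, RootPairing.coreflection_apply]
    have h1 : u - v ∈ Submodule.span k (P.coroot '' {j | j ∈ i :: l}) :=
      Submodule.span_mono (Set.image_mono (fun x hx => List.mem_cons_of_mem i hx)) (ih)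
    have h2 : P.coroot i ∈ Submodule.span k (P.coroot '' {j | j ∈ i :: l}) :=
      Submodule.subset_span ⟨i, List.mem_cons_self, rfl⟩
    have : u - P.root' i u • P.coroot i - v = (u - v) - P.root' i u • P.coroot i := by abel
    rw [this]
    exact sub_mem h1 (Submodule.smul_mem _ _ h2)

/-- Let `P` be a root pairing and `c : Fin r → ι` a family of indices whose coroots are
linearly independent.  If `v` is fixed by the composite `s_{c(r-1)} ∘ ⋯ ∘ s_{c 0}` of the
corresponding coreflections, then `⟨P.root (c j), v⟩ = 0` for every `j`; in particular `v`
is fixed by each individual coreflection `s_{c j}`. -/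
theorem fixed_by_coreflection_product_iff_orthogonal
    {ι k M N : Type*} [Field k] [AddCommGroup M] [Module k M]
    [AddCommGroup N] [Module k N]
    (P : RootPairing ι k M N) (r : ℕ) (c : Fin r → ι)
    (hli : LinearIndependent k fun j => P.coroot (c j))
    (v : N)
    (hv : ((List.ofFn fun j => P.coreflection (c j)).reverse.prod : N ≃ₗ[k] N) v = v) :
    (∀ j : Fin r, P.toLinearMap (P.root (c j)) v = 0) ∧
      ∀ j : Fin r, P.coreflection (c j) v = v := by
  suffices h : ∀ j : Fin r, P.toLinearMap (P.root (c j)) v = 0 by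
    refine ⟨h, fun j => ?_⟩
    rw [RootPairing.coreflection_apply]
    have : P.root' (c j) v = 0 := h j
    simp [this]
  induction r with
  | zero => exact fun j => absurd j.2 (by omega)
  | succ r ih =>
    -- split off the last reflection
    have hsplit : (List.ofFn fun j : Fin (r+1) => P.coreflection (c j)) =
        (List.ofFn fun j : Fin r => P.coreflection (c j.castSucc)).concat
          (P.coreflection (c (Fin.last r))) := by
      rw [List.ofFn_succ']
    set w' := ((List.ofFn fun j : Fin r => P.coreflection (c j.castSucc)).reverse.prod : N ≃ₗ[k] N)
      with hw'
    have hv' : P.coreflection (c (Fin.last r)) (w' v) = v := by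
      rw [hsplit] at hv
      rw [List.concat_eq_append, List.reverse_append, List.reverse_singleton] at hv
      simpa [List.prod_cons] using hv
    set u := w' v with hu
    -- u - v is in the span of the first r coroots
    have hmem : u - v ∈ Submodule.span k
        (Set.range fun j : Fin r => P.coroot (c j.castSucc)) := by
      have hlist : (List.ofFn fun j : Fin r => P.coreflection (c j.castSucc)).reverse =
          ((List.ofFn fun j : Fin r => c j.castSucc).reverse).map fun i => P.coreflection i := by
        rw [List.map_reverse, List.map_ofFn]
        rfl
      have := aux_prod_sub_mem P ((List.ofFn fun j : Fin r => c j.castSucc).reverse) v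
      rw [← hlist] at this
      refine Submodule.span_mono ?_ this
      rintro - ⟨x, hx, rfl⟩
      simp only [List.mem_reverse, List.mem_ofFn] at hx
      obtain ⟨j, rfl⟩ := hx
      exact ⟨j, rfl⟩
    obtain ⟨g, hg⟩ := (Finsupp.mem_span_range_iff_exists_finsupp).mp hmem
    -- from hv': u - v = a • coroot (c last)
    have ha : u - v = P.root' (c (Fin.last r)) u • P.coroot (c (Fin.last r)) := by
      rw [RootPairing.coreflection_apply] at hv'
      have := hv'
      linear_combination (norm := module) this
    set a := P.root' (c (Fin.last r)) u with hadef
    -- build full coefficient function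
    set G : Fin (r+1) → k := Fin.snoc (fun j => g j) (-a) with hG
    have hGsum : ∑ j : Fin (r+1), G j • P.coroot (c j) = 0 := by
      rw [Fin.sum_univ_castSucc]
      have h1 : ∀ j : Fin r, G j.castSucc = g j := fun j => Fin.snoc_castSucc _ _ _
      have h2 : G (Fin.last r) = -a := Fin.snoc_last _ _
      rw [h2]
      have : ∑ j : Fin r, G j.castSucc • P.coroot (c j.castSucc) = u - v := by
        rw [← hg]
        rw [Finsupp.sum_fintype]
        · exact Finset.sum_congr rfl fun j _ => by rw [h1]
        · intro; simp
      rw [this, ha]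
      module
    have hG0 : ∀ j, G j = 0 := by
      have := Fintype.linearIndependent_iff.mp hli G hGsum
      exact this
    have ha0 : a = 0 := by
      have h := hG0 (Fin.last r)
      rw [hG, Fin.snoc_last] at h
      exact neg_eq_zero.mp h
    have huv : u = v := by
      have : u - v = 0 := by rw [ha, ha0, zero_smul]
      linear_combination (norm := abel) this
    have hIH := ih (fun j => c j.castSucc)
      (hli.comp Fin.castSucc (Fin.castSucc_injective r)) (huv ▸ hu.symm)
    intro j
    refine Fin.lastCases ?_ (fun j => hIH j) j
    · have : P.root' (c (Fin.last r)) v = 0 := by rw [← huv]; exact ha0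
      exact this
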